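/- Let α > 0, a ≥ 0, b ≥ 0 be real numbers and let ξ be a nonnegative Borel measure on (0,∞) satisfying ∫₀^∞ min(t,1) ξ(dt) < ∞. Define Δ : (0,∞) → ℝ by Δ(x) = e^{αx}(a + bx) + ∫₀^∞ (e^{αx} − e^{−x(t−α)}) ξ(dt). If moreover a > 0, or b > 0, or ξ is not the zero measure, then Δ is three times differentiable on (0,∞), the third derivative Δ''' is strictly positive on (0,∞), and consequently the derivative Δ' is strictly convex on (0,∞). -/

import Mathlib

open MeasureTheory Real Set


/-- `t e^{-ct} ≤ 1/c`. -/
lemma aux_mul_exp_le (c t : ℝ) (hc : 0 < c) (ht : 0 ≤ t) :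
    t * Real.exp (-(c*t)) ≤ 1/c := by
  have h1 : c*t ≤ Real.exp (c*t) := by
    have := Real.add_one_le_exp (c*t); linarith
  rw [Real.exp_neg]
  rw [div_eq_mul_inv, one_mul]
  have hE : (0:ℝ) < Real.exp (c*t) := Real.exp_pos _
  rw [mul_inv_le_iff₀ hE, inv_mul_eq_div, le_div_iff₀ hc]
  nlinarith

/-- `t³ e^{-lt} ≤ (3/l)³`. -/
lemma aux_cube_exp_le (l t : ℝ) (hl : 0 < l) (ht : 0 ≤ t) :
    t^3 * Real.exp (-(l*t)) ≤ (3/l)^3 := by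
  have h := aux_mul_exp_le (l/3) t (by positivity) ht
  have h2 : t^3 * Real.exp (-(l*t)) = (t * Real.exp (-(l/3*t)))^3 := by
    rw [mul_pow, ← Real.exp_nat_mul]
    ring_nf
  rw [h2, show (3/l : ℝ) = 1/(l/3) by field_simp]
  have hnn : 0 ≤ t * Real.exp (-(l/3*t)) := by positivity
  exact pow_le_pow_left₀ hnn h 3

/-- The k-th x-derivative of `e^{αx} - e^{-x(t-α)}`. -/
noncomputable def Fk (α : ℝ) (k : ℕ) (x t : ℝ) : ℝ :=
  α^k * Real.exp (α*x) - (α-t)^k * Real.exp (-x*(t-α))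

lemma Fk_hasDerivAt (α : ℝ) (k : ℕ) (x t : ℝ) :
    HasDerivAt (fun x => Fk α k x t) (Fk α (k+1) x t) x := by
  have h1 : HasDerivAt (fun x => Real.exp (α*x)) (Real.exp (α*x) * α) x := by
    simpa [mul_comm] using ((hasDerivAt_id x).const_mul α).exp
  have h2 : HasDerivAt (fun x => Real.exp (-x*(t-α))) (Real.exp (-x*(t-α)) * (-(t-α))) x := by
    simpa using (((hasDerivAt_id x).neg).mul_const (t-α)).exp
  have := (h1.const_mul (α^k)).sub (h2.const_mul ((α-t)^k))
  refine this.congr_deriv ?_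
  unfold Fk
  rw [pow_succ, pow_succ]
  ring

lemma Fk_eq (α : ℝ) (k : ℕ) (x t : ℝ) :
    Fk α k x t = Real.exp (α*x) *
      (α^k * (1 - Real.exp (-(x*t))) + (α^k - (α-t)^k) * Real.exp (-(x*t))) := by
  unfold Fk
  rw [show -x*(t-α) = -(x*t) + α*x by ring, Real.exp_add]
  ring

/-- bound on `|α^k - (α-t)^k|` for `k ≤ 3`. -/
lemma pow_sub_pow_bound (α t : ℝ) (hα : 0 < α) (ht : 0 < t) (k : ℕ) (hk : k ≤ 3) :
    |α^k - (α-t)^k| ≤ t * (3*(α+t)^2 + 3*(α+t) + 3) := by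
  interval_cases k <;> rw [abs_le] <;> constructor <;> nlinarith [sq_nonneg t, sq_nonneg α, sq_nonneg (α-t), sq_nonneg (α+t), mul_pos hα ht]

lemma aux_poly (l t : ℝ) (hl : 0 < l) (ht : 0 < t) :
    t * (1+t)^2 * Real.exp (-(l*t)) ≤ (4 + 4*(3/l)^3) * min t 1 := by
  have hc3 : (0:ℝ) ≤ (3/l)^3 := by positivity
  have hE0 : (0:ℝ) < Real.exp (-(l*t)) := Real.exp_pos _
  rcases le_total t 1 with h | h
  · rw [min_eq_left h]
    have hE : Real.exp (-(l*t)) ≤ 1 := Real.exp_le_one_iff.2 (by nlinarith)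
    calc t * (1+t)^2 * Real.exp (-(l*t)) ≤ t * (1+t)^2 * 1 :=
          mul_le_mul_of_nonneg_left hE (by positivity)
      _ ≤ 4*t := by nlinarith [mul_nonneg (mul_nonneg ht.le (by linarith : (0:ℝ) ≤ 1 - t)) (by linarith : (0:ℝ) ≤ t + 3)]
      _ ≤ (4 + 4*(3/l)^3) * t := by nlinarith
  · rw [min_eq_right h, mul_one]
    have h3 := aux_cube_exp_le l t hl (by linarith)
    calc t * (1+t)^2 * Real.exp (-(l*t)) ≤ (4*t^3) * Real.exp (-(l*t)) := by
          have h4 : t * (1+t)^2 ≤ 4*t^3 := by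
            nlinarith [mul_nonneg (mul_nonneg ht.le (by linarith : (0:ℝ) ≤ t - 1)) (by linarith : (0:ℝ) ≤ 3*t + 1)]
          exact mul_le_mul_of_nonneg_right h4 hE0.le
      _ = 4*(t^3 * Real.exp (-(l*t))) := by ring
      _ ≤ 4*(3/l)^3 := by linarith
      _ ≤ 4 + 4*(3/l)^3 := by linarith

lemma Fk_bound (α : ℝ) (hα : 0 < α) (k : ℕ) (hk : k ≤ 3) (l u : ℝ) (hl : 0 < l)
    (x : ℝ) (hx : x ∈ Set.Icc l u) (t : ℝ) (ht : 0 < t) :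
    |Fk α k x t| ≤ Real.exp (α*u) * ((α+1)^3*(u+1) + 9*(1+α)^2*(4+4*(3/l)^3)) * min t 1 := by
  obtain ⟨hxl, hxu⟩ := hx
  have hx0 : 0 < x := lt_of_lt_of_le hl hxl
  have hu : 0 < u := lt_of_lt_of_le hx0 hxu
  set E := Real.exp (-(x*t)) with hEdef
  have hE0 : 0 < E := Real.exp_pos _
  have hE1 : E ≤ 1 := Real.exp_le_one_iff.2 (by nlinarith)
  have h1mE : 1 - E ≤ min 1 (x*t) := by
    refine le_min (by linarith) ?_
    have := Real.add_one_le_exp (-(x*t))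
    simp only [← hEdef] at this
    linarith
  have hmin : 0 ≤ min t 1 := le_min ht.le zero_le_one
  have hak : α^k ≤ (α+1)^3 :=
    le_trans (pow_le_pow_left₀ hα.le (by linarith) k)
      (pow_le_pow_right₀ (by linarith) hk)
  have hak0 : 0 ≤ α^k := by positivity
  -- step A
  have stepA : |Fk α k x t| ≤ Real.exp (α*x) *
      (α^k * (1 - E) + |α^k - (α-t)^k| * E) := by
    rw [Fk_eq, abs_mul, Real.abs_exp]
    gcongr
    calc |α^k * (1-E) + (α^k - (α-t)^k) * E|
        ≤ |α^k * (1-E)| + |(α^k - (α-t)^k) * E| := abs_add_le _ _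
      _ = α^k * (1 - E) + |α^k - (α-t)^k| * E := by
          rw [abs_mul, abs_mul, abs_of_nonneg hak0, abs_of_nonneg (by linarith : (0:ℝ) ≤ 1 - E),
            abs_of_pos hE0]
  -- step C : first summand
  have stepC : α^k * (1 - E) ≤ (α+1)^3 * (u+1) * min t 1 := by
    have h2 : 1 - E ≤ (u+1) * min t 1 := by
      refine le_trans h1mE ?_
      rcases le_total t 1 with h | h
      · rw [min_eq_left h]
        calc min 1 (x*t) ≤ x*t := min_le_right _ _
          _ ≤ (u+1)*t := by nlinarith
      · rw [min_eq_right h]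
        calc min 1 (x*t) ≤ 1 := min_le_left _ _
          _ ≤ (u+1)*1 := by nlinarith
    calc α^k * (1-E) ≤ (α+1)^3 * ((u+1) * min t 1) := by
          apply mul_le_mul hak h2 (by linarith) (by positivity)
      _ = (α+1)^3 * (u+1) * min t 1 := by ring
  -- step D : second summand
  have stepD : |α^k - (α-t)^k| * E ≤ 9*(1+α)^2*(4+4*(3/l)^3) * min t 1 := by
    have hElt : E ≤ Real.exp (-(l*t)) := Real.exp_le_exp.2 (by nlinarith)
    have hd := pow_sub_pow_bound α t hα ht k hk
    have hpoly : 3*(α+t)^2 + 3*(α+t) + 3 ≤ 9*(1+α)^2*(1+t)^2 := by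
      nlinarith [sq_nonneg (α*t), sq_nonneg (α-t), sq_nonneg (α+t), mul_pos hα ht,
        sq_nonneg t, sq_nonneg α, mul_pos (mul_pos hα hα) ht, mul_pos hα (mul_pos ht ht)]
    have haux := aux_poly l t hl ht
    calc |α^k - (α-t)^k| * E ≤ (t * (3*(α+t)^2 + 3*(α+t) + 3)) * Real.exp (-(l*t)) := by
          apply mul_le_mul hd hElt hE0.le (by nlinarith)
      _ ≤ (t * (9*(1+α)^2*(1+t)^2)) * Real.exp (-(l*t)) :=
          mul_le_mul_of_nonneg_right (mul_le_mul_of_nonneg_left hpoly ht.le) (Real.exp_pos _).le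
      _ = 9*(1+α)^2 * (t * (1+t)^2 * Real.exp (-(l*t))) := by ring
      _ ≤ 9*(1+α)^2 * ((4+4*(3/l)^3) * min t 1) :=
          mul_le_mul_of_nonneg_left haux (by positivity)
      _ = 9*(1+α)^2*(4+4*(3/l)^3) * min t 1 := by ring
  calc |Fk α k x t| ≤ Real.exp (α*x) * (α^k * (1 - E) + |α^k - (α-t)^k| * E) := stepA
    _ ≤ Real.exp (α*u) * ((α+1)^3*(u+1) * min t 1 + 9*(1+α)^2*(4+4*(3/l)^3) * min t 1) := by
        apply mul_le_mul (Real.exp_le_exp.2 (by nlinarith)) (add_le_add stepC stepD)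
          (add_nonneg (mul_nonneg hak0 (by linarith))
            (mul_nonneg (abs_nonneg _) hE0.le)) (Real.exp_pos _).le
    _ = Real.exp (α*u) * ((α+1)^3*(u+1) + 9*(1+α)^2*(4+4*(3/l)^3)) * min t 1 := by ring

lemma Fk_bound' (α : ℝ) (hα : 0 < α) (k : ℕ) (hk : k ≤ 3) (l u : ℝ) (hl : 0 < l) (hu : l ≤ u) :
    ∃ C : ℝ, 0 ≤ C ∧ ∀ x ∈ Set.Icc l u, ∀ t, 0 < t → |Fk α k x t| ≤ C * min t 1 := by
  refine ⟨_, ?_, fun x hx t ht => Fk_bound α hα k hk l u hl x hx t ht⟩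
  have h1 : (0:ℝ) < 3/l := div_pos (by norm_num) hl
  have h2 : (0:ℝ) ≤ (3/l)^3 := pow_nonneg h1.le 3
  refine mul_nonneg (Real.exp_pos _).le (add_nonneg ?_ ?_)
  · exact mul_nonneg (by positivity) (by linarith)
  · exact mul_nonneg (by positivity) (by linarith)

lemma Fk_continuous (α x : ℝ) (k : ℕ) : Continuous (fun t => Fk α k x t) := by
  unfold Fk; fun_prop

lemma Fk3_pos (α x t : ℝ) (hα : 0 < α) (hx : 0 < x) (ht : 0 < t) : 0 < Fk α 3 x t := by
  unfold Fk
  rcases le_total α t with h | h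
  · have h1 : (α - t)^3 ≤ 0 := Odd.pow_nonpos (by decide) (by linarith)
    have h2 : (α-t)^3 * Real.exp (-x*(t-α)) ≤ 0 :=
      mul_nonpos_of_nonpos_of_nonneg h1 (Real.exp_pos _).le
    nlinarith [mul_pos (pow_pos hα 3) (Real.exp_pos (α*x))]
  · have h0 : 0 ≤ α - t := by linarith
    have h1 : (α-t)^3 < α^3 := by nlinarith [mul_pos ht ht, mul_nonneg (mul_nonneg hα.le h0) ht.le]
    have h2 : Real.exp (-x*(t-α)) ≤ Real.exp (α*x) := Real.exp_le_exp.2 (by nlinarith)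
    have h3 := mul_le_mul_of_nonneg_left h2 (pow_nonneg h0 3)
    have h4 := mul_lt_mul_of_pos_right h1 (Real.exp_pos (α*x))
    linarith

noncomputable def Pf (α a b : ℝ) (k : ℕ) (x : ℝ) : ℝ :=
  Real.exp (α*x) * (α^k*(a+b*x) + (k:ℝ)*α^(k-1)*b)

lemma Pf_hasDerivAt (α a b : ℝ) (k : ℕ) (x : ℝ) :
    HasDerivAt (Pf α a b k) (Pf α a b (k+1) x) x := by
  have h1 : HasDerivAt (fun x => Real.exp (α*x)) (Real.exp (α*x) * α) x := by
    simpa [mul_comm] using ((hasDerivAt_id x).const_mul α).exp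
  have h2 : HasDerivAt (fun x : ℝ => α^k*(a+b*x) + (k:ℝ)*α^(k-1)*b) (α^k*b) x := by
    have h3 : HasDerivAt (fun x : ℝ => a + b*x) b x := by
      simpa using ((hasDerivAt_id x).const_mul b).const_add a
    simpa using (h3.const_mul (α^k)).add_const ((k:ℝ)*α^(k-1)*b)
  have h4 := h1.mul h2
  refine h4.congr_deriv ?_
  unfold Pf
  cases k with
  | zero => norm_num; ring
  | succ n =>
    simp only [Nat.succ_sub_one, Nat.add_sub_cancel]
    push_cast
    ring


/-- Bernstein-type representation `Δ(x) = e^{αx}(a+bx) + ∫ (e^{αx} - e^{-x(t-α)}) ξ(dt)`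
with `α > 0`, `a, b ≥ 0`, `ξ` a nonnegative measure on `(0,∞)` with `∫ min(t,1) ξ(dt) < ∞`.
If `a > 0`, `b > 0` or `ξ ≠ 0`, then `Δ` is three times differentiable on `(0,∞)`,
`Δ'''` is strictly positive there, and `Δ'` is strictly convex on `(0,∞)`. -/
theorem stmt_0 (α a b : ℝ) (hα : 0 < α) (ha : 0 ≤ a) (hb : 0 ≤ b)
    (ξ : Measure ℝ) (hsupp : ξ (Set.Ioi (0 : ℝ))ᶜ = 0)
    (hint : Integrable (fun t => min t 1) ξ)
    (hnd : 0 < a ∨ 0 < b ∨ ξ ≠ 0)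
    (Δ : ℝ → ℝ)
    (hΔ : ∀ x : ℝ, Δ x = Real.exp (α * x) * (a + b * x)
        + ∫ t, (Real.exp (α * x) - Real.exp (-x * (t - α))) ∂ξ) :
    (∀ x ∈ Set.Ioi (0 : ℝ), DifferentiableAt ℝ Δ x ∧ DifferentiableAt ℝ (deriv Δ) x ∧
      DifferentiableAt ℝ (deriv (deriv Δ)) x) ∧
    (∀ x ∈ Set.Ioi (0 : ℝ), 0 < deriv (deriv (deriv Δ)) x) ∧
    StrictConvexOn ℝ (Set.Ioi (0 : ℝ)) (deriv Δ) := by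
  have hae : ∀ᵐ t ∂ξ, 0 < t := by
    rw [ae_iff]
    have he : {t : ℝ | ¬ 0 < t} = (Set.Ioi (0:ℝ))ᶜ := by ext t; simp
    rw [he, hsupp]
  -- integrability of Fk
  have hFk_int : ∀ k : ℕ, k ≤ 3 → ∀ x : ℝ, 0 < x → Integrable (fun t => Fk α k x t) ξ := by
    intro k hk x hx
    obtain ⟨C, hC0, hC⟩ := Fk_bound' α hα k hk x x hx le_rfl
    refine Integrable.mono (hint.const_mul C)
      ((Fk_continuous α x k).aestronglyMeasurable) (hae.mono fun t ht => ?_)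
    rw [Real.norm_eq_abs, Real.norm_eq_abs]
    exact le_trans (hC x ⟨le_rfl, le_rfl⟩ t ht) (le_abs_self _)
  -- differentiation under the integral sign
  have key : ∀ k : ℕ, k ≤ 2 → ∀ x₀ : ℝ, 0 < x₀ →
      HasDerivAt (fun x => ∫ t, Fk α k x t ∂ξ) (∫ t, Fk α (k+1) x₀ t ∂ξ) x₀ := by
    intro k hk x₀ hx₀
    obtain ⟨C, hC0, hC⟩ := Fk_bound' α hα (k+1) (by omega) (x₀/2) (2*x₀) (by linarith) (by linarith)
    have hball : Metric.ball x₀ (x₀/2) ⊆ Set.Icc (x₀/2) (2*x₀) := by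
      intro x hx
      rw [Metric.mem_ball, Real.dist_eq, abs_lt] at hx
      constructor <;> linarith [hx.1, hx.2]
    have H := hasDerivAt_integral_of_dominated_loc_of_deriv_le (μ := ξ)
      (F := fun x t => Fk α k x t) (F' := fun x t => Fk α (k+1) x t)
      (bound := fun t => C * min t 1)
      (Metric.ball_mem_nhds x₀ (show (0:ℝ) < x₀/2 by linarith))
      (Filter.Eventually.of_forall fun x => (Fk_continuous α x k).aestronglyMeasurable)
      (hFk_int k (by omega) x₀ hx₀)
      ((Fk_continuous α x₀ (k+1)).aestronglyMeasurable)
      (hae.mono fun t ht x hx => by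
        rw [Real.norm_eq_abs]; exact hC x (hball hx) t ht)
      (hint.const_mul C)
      (Filter.Eventually.of_forall fun t x hx => Fk_hasDerivAt α k x t)
    exact H.2
  set I : ℕ → ℝ → ℝ := fun k x => ∫ t, Fk α k x t ∂ξ with hI
  have hΔeq : Δ = fun x => Pf α a b 0 x + I 0 x := by
    funext x
    rw [hΔ]
    simp only [hI, Pf, Fk, pow_zero, one_mul, Nat.cast_zero, zero_mul, add_zero]
  have hD0 : ∀ x ∈ Set.Ioi (0:ℝ), HasDerivAt Δ (Pf α a b 1 x + I 1 x) x := fun x hx => by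
    rw [hΔeq]; exact (Pf_hasDerivAt α a b 0 x).add (key 0 (by norm_num) x hx)
  have hd1 : ∀ x ∈ Set.Ioi (0:ℝ), deriv Δ x = Pf α a b 1 x + I 1 x :=
    fun x hx => (hD0 x hx).deriv
  have hD1 : ∀ x ∈ Set.Ioi (0:ℝ), HasDerivAt (deriv Δ) (Pf α a b 2 x + I 2 x) x := fun x hx => by
    have heq : deriv Δ =ᶠ[nhds x] (fun y => Pf α a b 1 y + I 1 y) :=
      Filter.eventuallyEq_of_mem (isOpen_Ioi.mem_nhds hx) (fun y hy => hd1 y hy)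
    exact ((Pf_hasDerivAt α a b 1 x).add (key 1 (by norm_num) x hx)).congr_of_eventuallyEq heq
  have hd2 : ∀ x ∈ Set.Ioi (0:ℝ), deriv (deriv Δ) x = Pf α a b 2 x + I 2 x :=
    fun x hx => (hD1 x hx).deriv
  have hD2 : ∀ x ∈ Set.Ioi (0:ℝ), HasDerivAt (deriv (deriv Δ)) (Pf α a b 3 x + I 3 x) x :=
    fun x hx => by
    have heq : deriv (deriv Δ) =ᶠ[nhds x] (fun y => Pf α a b 2 y + I 2 y) :=
      Filter.eventuallyEq_of_mem (isOpen_Ioi.mem_nhds hx) (fun y hy => hd2 y hy)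
    exact ((Pf_hasDerivAt α a b 2 x).add (key 2 le_rfl x hx)).congr_of_eventuallyEq heq
  have hd3 : ∀ x ∈ Set.Ioi (0:ℝ), deriv (deriv (deriv Δ)) x = Pf α a b 3 x + I 3 x :=
    fun x hx => (hD2 x hx).deriv
  -- positivity
  have hP3nonneg : ∀ x ∈ Set.Ioi (0:ℝ), 0 ≤ Pf α a b 3 x := fun x hx => by
    have hx0 : (0:ℝ) < x := hx
    unfold Pf
    have h1 : 0 ≤ α^3*(a+b*x) + ((3:ℕ):ℝ)*α^(3-1)*b := by
      push_cast
      nlinarith [pow_pos hα 3, pow_pos hα 2, mul_nonneg hb hx0.le]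
    exact mul_nonneg (Real.exp_pos _).le h1
  have hI3nonneg : ∀ x ∈ Set.Ioi (0:ℝ), 0 ≤ I 3 x := fun x hx =>
    integral_nonneg_of_ae (hae.mono fun t ht => (Fk3_pos α x t hα hx ht).le)
  have hpos : ∀ x ∈ Set.Ioi (0:ℝ), 0 < Pf α a b 3 x + I 3 x := by
    intro x hx
    have hx0 : (0:ℝ) < x := hx
    rcases hnd with h | h | h
    · have : 0 < Pf α a b 3 x := by
        unfold Pf
        have h1 : 0 < α^3*(a+b*x) + ((3:ℕ):ℝ)*α^(3-1)*b := by
          push_cast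
          nlinarith [pow_pos hα 3, pow_pos hα 2, mul_nonneg hb hx0.le]
        exact mul_pos (Real.exp_pos _) h1
      linarith [hI3nonneg x hx]
    · have : 0 < Pf α a b 3 x := by
        unfold Pf
        have h1 : 0 < α^3*(a+b*x) + ((3:ℕ):ℝ)*α^(3-1)*b := by
          push_cast
          nlinarith [pow_pos hα 3, pow_pos hα 2, mul_nonneg hb hx0.le, mul_pos (pow_pos hα 2) h]
        exact mul_pos (Real.exp_pos _) h1
      linarith [hI3nonneg x hx]
    · have hμ : 0 < ξ (Set.Ioi 0) := by
        rw [pos_iff_ne_zero]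
        intro h0
        apply h
        refine Measure.measure_univ_eq_zero.1 (le_antisymm ?_ zero_le)
        calc ξ Set.univ = ξ (Set.Ioi 0 ∪ (Set.Ioi 0)ᶜ) := by rw [Set.union_compl_self]
          _ ≤ ξ (Set.Ioi 0) + ξ (Set.Ioi 0)ᶜ := measure_union_le _ _
          _ = 0 := by rw [h0, hsupp, add_zero]
      have hI3pos : 0 < I 3 x := by
        refine (integral_pos_iff_support_of_nonneg_ae
          (hae.mono fun t ht => (Fk3_pos α x t hα hx ht).le)
          (hFk_int 3 le_rfl x hx)).2 ?_
        exact lt_of_lt_of_le hμ (measure_mono fun t ht => (Fk3_pos α x t hα hx ht).ne')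
      linarith [hP3nonneg x hx]
  refine ⟨fun x hx => ⟨(hD0 x hx).differentiableAt, (hD1 x hx).differentiableAt,
    (hD2 x hx).differentiableAt⟩, fun x hx => ?_, ?_⟩
  · rw [hd3 x hx]; exact hpos x hx
  · apply strictConvexOn_of_deriv2_pos (convex_Ioi 0)
    · exact fun x hx => ((hD1 x hx).differentiableAt.continuousAt).continuousWithinAt
    · intro x hx
      rw [interior_Ioi] at hx
      have h2 : deriv^[2] (deriv Δ) x = deriv (deriv (deriv Δ)) x := by
        simp [Function.iterate_succ_apply']
      rw [h2, hd3 x hx]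
      exact hpos x hx
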